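/- Let f be superquadratic on [0,∞), [a,b] ⊂ (0,∞), k a positive integer, and q_1,...,q_k > 0 with ∑ q_i = 1. Then (1/(b-a)^k)∫_{[a,b]^k} f(∑_{i=1}^k q_i x_i) dx_1···dx_k - f((a+b)/2) ≥ (1/(b-a)^k)∫_{[a,b]^k} f(|∑_{i=1}^k q_i x_i - (a+b)/2|) dx_1···dx_k. -/

import Mathlib

open MeasureTheory in
lemma box_coord_integral (a b : ℝ) (hab : a ≤ b) (k : ℕ) (i : Fin k) :
    ∫ x : Fin k → ℝ in Set.Icc (fun _ => a) (fun _ => b), x i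
      = ((a + b) / 2 * (b - a)) * (b - a) ^ (k - 1) := by
  have hIcc : Set.Icc (fun _ : Fin k => a) (fun _ => b)
      = Set.pi Set.univ (fun _ => Set.Icc a b) := (Set.pi_univ_Icc _ _).symm
  set F : Fin k → ℝ → ℝ := fun j t =>
    if j = i then (Set.Icc a b).indicator id t else (Set.Icc a b).indicator (fun _ => 1) t
    with hF
  have key : ∀ x : Fin k → ℝ,
      (Set.Icc (fun _ : Fin k => a) (fun _ => b)).indicator (fun x => x i) x
        = ∏ j, F j (x j) := by
    intro x
    by_cases hx : x ∈ Set.Icc (fun _ : Fin k => a) (fun _ => b)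
    · rw [Set.indicator_of_mem hx]
      have hxj : ∀ j, x j ∈ Set.Icc a b := fun j => ⟨hx.1 j, hx.2 j⟩
      rw [Finset.prod_eq_single i]
      · simp [hF, Set.indicator_of_mem (hxj i)]
      · intro j _ hj
        simp [hF, hj, Set.indicator_of_mem (hxj j)]
      · simp
    · rw [Set.indicator_of_notMem hx]
      rw [hIcc] at hx
      simp only [Set.mem_pi, Set.mem_univ, forall_true_left] at hx
      push_neg at hx
      obtain ⟨j, hj⟩ := hx
      refine (Finset.prod_eq_zero (Finset.mem_univ j) ?_).symm
      by_cases hji : j = i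
      · subst hji; simp [hF, Set.indicator_of_notMem hj]
      · simp [hF, hji, Set.indicator_of_notMem hj]
  rw [← MeasureTheory.integral_indicator measurableSet_Icc]
  simp_rw [key]
  rw [MeasureTheory.integral_fintype_prod_volume_eq_prod F]
  have hInt1 : ∫ t, F i t = (a + b) / 2 * (b - a) := by
    simp only [hF, if_pos rfl]
    rw [MeasureTheory.integral_indicator measurableSet_Icc,
      MeasureTheory.integral_Icc_eq_integral_Ioc,
      ← intervalIntegral.integral_of_le hab]
    simp only [id]
    rw [integral_id]
    ring
  have hInt2 : ∀ j ∈ Finset.univ.erase i, ∫ t, F j t = b - a := by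
    intro j hj
    have hji := Finset.ne_of_mem_erase hj
    simp only [hF, if_neg hji]
    rw [MeasureTheory.integral_indicator measurableSet_Icc]
    simp [Real.volume_Icc, ENNReal.toReal_ofReal (sub_nonneg.2 hab), hab]
  rw [← Finset.mul_prod_erase Finset.univ _ (Finset.mem_univ i), hInt1,
    Finset.prod_congr rfl hInt2, Finset.prod_const,
    Finset.card_erase_of_mem (Finset.mem_univ i), Finset.card_univ, Fintype.card_fin]

open MeasureTheory in
theorem integral_jensen_box_superquadratic (f : ℝ → ℝ) (a b : ℝ)
    (hf : ∀ x ≥ (0:ℝ), ∃ C : ℝ, ∀ y ≥ (0:ℝ), f y - f x ≥ f |y - x| + C * (y - x))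
    (ha : 0 < a) (hab : a < b)
    (k : ℕ) (hk : 0 < k) (q : Fin k → ℝ)
    (hq : ∀ i, 0 < q i) (hq1 : ∑ i, q i = 1)
    (hint1 : IntegrableOn (fun x : Fin k → ℝ => f (∑ i, q i * x i))
      (Set.Icc (fun _ => a) (fun _ => b)) volume)
    (hint2 : IntegrableOn (fun x : Fin k → ℝ => f |(∑ i, q i * x i) - (a + b) / 2|)
      (Set.Icc (fun _ => a) (fun _ => b)) volume) :
    (1 / (b - a) ^ k) *
        (∫ x in Set.Icc (fun _ => a) (fun _ => b), f (∑ i, q i * x i)) -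
      f ((a + b) / 2) ≥
    (1 / (b - a) ^ k) *
        ∫ x in Set.Icc (fun _ => a) (fun _ => b),
          f |(∑ i, q i * x i) - (a + b) / 2| := by
  set m : ℝ := (a + b) / 2 with hm
  have hm0 : (0:ℝ) ≤ m := by rw [hm]; linarith
  obtain ⟨C, hC⟩ := hf m hm0
  set s := Set.Icc (fun _ : Fin k => a) (fun _ => b) with hs
  have hsmeas : MeasurableSet s := measurableSet_Icc
  have hba : (0:ℝ) < b - a := by linarith
  have hV : (0:ℝ) < (b - a) ^ k := by positivity
  have hsfin : volume s < ⊤ := (isCompact_Icc).measure_lt_top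
  have hvol : (volume s).toReal = (b - a) ^ k := by
    rw [hs, Real.volume_Icc_pi_toReal (fun _ => hab.le)]
    simp
  -- integrability of the linear part
  have hcont : Continuous (fun x : Fin k → ℝ => C * (∑ i, q i * x i - m)) := by
    fun_prop
  have hint3 : IntegrableOn (fun x : Fin k → ℝ => C * (∑ i, q i * x i - m)) s volume :=
    hcont.continuousOn.integrableOn_compact isCompact_Icc
  have hintc : IntegrableOn (fun _ : Fin k → ℝ => f m) s volume :=
    integrableOn_const hsfin.ne
  have hint4 : IntegrableOn (fun x : Fin k → ℝ =>
      f m + (f |∑ i, q i * x i - m| + C * (∑ i, q i * x i - m))) s volume :=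
    hintc.add (hint2.add hint3)
  -- pointwise estimate
  have hpt : ∀ x ∈ s, f m + (f |∑ i, q i * x i - m| + C * (∑ i, q i * x i - m))
      ≤ f (∑ i, q i * x i) := by
    intro x hx
    have hy : (0:ℝ) ≤ ∑ i, q i * x i :=
      Finset.sum_nonneg fun i _ => mul_nonneg (hq i).le (le_trans ha.le (hx.1 i))
    have := hC _ hy
    linarith
  have hmono := setIntegral_mono_on hint4 hint1 hsmeas hpt
  -- the linear part integrates to zero
  have hcoordint : ∀ i : Fin k, IntegrableOn (fun x : Fin k → ℝ => q i * x i) s volume :=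
    fun i => ((continuous_const.mul (continuous_apply i)).continuousOn).integrableOn_compact
      isCompact_Icc
  have hsumint : IntegrableOn (fun x : Fin k → ℝ => ∑ i, q i * x i) s volume := by
    have := MeasureTheory.integrable_finset_sum (μ := volume.restrict s) Finset.univ
      (fun i _ => hcoordint i)
    exact this
  have hzero : ∫ x in s, C * (∑ i, q i * x i - m) = 0 := by
    rw [MeasureTheory.integral_const_mul]
    have h1 : ∫ x in s, (∑ i, q i * x i - m) = 0 := by
      rw [MeasureTheory.integral_sub hsumint (integrableOn_const hsfin.ne)]
      rw [MeasureTheory.integral_finset_sum Finset.univ (fun i _ => hcoordint i)]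
      have hco : ∀ i : Fin k, ∫ x in s, q i * x i = q i * (m * (b - a) ^ k) := by
        intro i
        rw [MeasureTheory.integral_const_mul, hs, box_coord_integral a b hab.le k i]
        rw [hm]
        rw [show (a + b) / 2 * (b - a) * (b - a) ^ (k - 1)
            = (a + b) / 2 * ((b - a) * (b - a) ^ (k - 1)) by ring,
          ← pow_succ', Nat.sub_add_cancel hk]
      rw [Finset.sum_congr rfl (fun i _ => hco i), ← Finset.sum_mul, hq1,
        MeasureTheory.setIntegral_const, smul_eq_mul, measureReal_def, hvol]
      ring
    rw [h1, mul_zero]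
  have hint23 : IntegrableOn (fun x : Fin k → ℝ =>
      f |∑ i, q i * x i - m| + C * (∑ i, q i * x i - m)) s volume := hint2.add hint3
  rw [MeasureTheory.integral_add hintc hint23,
    MeasureTheory.integral_add hint2 hint3, hzero,
    MeasureTheory.setIntegral_const, smul_eq_mul, measureReal_def, hvol, add_zero] at hmono
  -- conclude
  set I1 := ∫ x in s, f (∑ i, q i * x i) with hI1
  set I2 := ∫ x in s, f |∑ i, q i * x i - m| with hI2
  rw [ge_iff_le, le_sub_iff_add_le]
  have h2 : (1 / (b - a) ^ k) * ((b - a) ^ k * f m + I2)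
      ≤ (1 / (b - a) ^ k) * I1 :=
    mul_le_mul_of_nonneg_left hmono (by positivity)
  have h3 : (1 / (b - a) ^ k) * ((b - a) ^ k * f m + I2)
      = f m + (1 / (b - a) ^ k) * I2 := by
    field_simp
  linarith
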